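/- For every integer n ≥ 1 and every real R > 0 there exists a constant c > 0 such that for every real λ ≥ 1 and every y ∈ ℂⁿ with ‖y‖ ≤ R one has λ^{2n} · ∫_{{z ∈ ℂⁿ : ‖z‖ < 1/λ}} |log ‖y − z‖| dz ≤ c + c · log λ, and if moreover y ≠ 0 then λ^{2n} · ∫_{{z ∈ ℂⁿ : ‖z‖ < 1/λ}} |log ‖y − z‖| dz ≤ c + c · min( log λ, |log ‖y‖| ). -/

import Mathlib

open MeasureTheory

open Metric Set ENNReal in
/-- Key kernel estimate: the integral of `|log ‖w‖|` over the ball of radius `s`. -/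
lemma lintegral_abs_log_norm_ball_le {E : Type*} [NormedAddCommGroup E] [NormedSpace ℝ E]
    [MeasurableSpace E] [BorelSpace E] [FiniteDimensional ℝ E] [Nontrivial E]
    (μ : Measure E) [μ.IsAddHaarMeasure] {s : ℝ} (hs : 0 < s) :
    ∫⁻ w in Metric.ball (0 : E) s, ENNReal.ofReal |Real.log ‖w‖| ∂μ ≤
      ENNReal.ofReal (s ^ Module.finrank ℝ E) * μ (Metric.ball 0 1) *
        (ENNReal.ofReal |Real.log s| + 1) := by
  set d := Module.finrank ℝ E with hd
  have hd1 : 1 ≤ d := Module.finrank_pos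
  have hballne : μ (ball (0 : E) 1) ≠ ∞ := measure_ball_lt_top.ne
  have h0ae : ∀ᵐ w ∂(μ.restrict (ball (0 : E) s)), w ≠ 0 := by
    refine ae_restrict_of_ae ?_
    refine ae_iff.2 ?_
    have : {a : E | ¬a ≠ 0} = {0} := by ext a; simp
    rw [this]
    exact measure_singleton 0
  -- pointwise bound
  have hpt : ∀ᵐ w ∂(μ.restrict (ball (0 : E) s)),
      ENNReal.ofReal |Real.log ‖w‖| ≤
        ENNReal.ofReal |Real.log s| + ENNReal.ofReal (Real.log s - Real.log ‖w‖) := by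
    filter_upwards [ae_restrict_mem measurableSet_ball, h0ae] with w hw hw0
    rw [mem_ball_zero_iff] at hw
    have h1 : 0 < ‖w‖ := norm_pos_iff.2 hw0
    have hls : Real.log ‖w‖ ≤ Real.log s := Real.log_le_log h1 hw.le
    rw [← ENNReal.ofReal_add (abs_nonneg _) (by linarith)]
    refine ENNReal.ofReal_le_ofReal ?_
    rcases abs_cases (Real.log ‖w‖) with ⟨h, _⟩ | ⟨h, _⟩
    · rw [h]; linarith [le_abs_self (Real.log s)]
    · rw [h]; linarith [neg_abs_le (Real.log s)]
  have hmain := lintegral_mono_ae hpt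
  have hsplit : ∫⁻ w in ball (0 : E) s,
      (ENNReal.ofReal |Real.log s| + ENNReal.ofReal (Real.log s - Real.log ‖w‖)) ∂μ =
      ENNReal.ofReal |Real.log s| * μ (ball (0 : E) s) +
        ∫⁻ w in ball (0 : E) s, ENNReal.ofReal (Real.log s - Real.log ‖w‖) ∂μ := by
    rw [lintegral_add_left measurable_const, setLIntegral_const]
  -- layer cake for the second integral
  have hA : ∫⁻ w in ball (0 : E) s, ENNReal.ofReal (Real.log s - Real.log ‖w‖) ∂μ ≤
      ENNReal.ofReal (s ^ d) * μ (ball (0 : E) 1) := by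
    have f_mble : Measurable fun w : E => Real.log s - Real.log ‖w‖ :=
      (Real.measurable_log.comp measurable_norm).const_sub _
    have f_nn : 0 ≤ᵐ[μ.restrict (ball (0 : E) s)] fun w => Real.log s - Real.log ‖w‖ := by
      filter_upwards [ae_restrict_mem measurableSet_ball, h0ae] with w hw hw0
      rw [mem_ball_zero_iff] at hw
      have h1 : 0 < ‖w‖ := norm_pos_iff.2 hw0
      simpa using Real.log_le_log h1 hw.le
    rw [lintegral_eq_lintegral_meas_lt _ f_nn f_mble.aemeasurable]
    have hbd : ∀ᵐ t ∂(volume.restrict (Set.Ioi (0 : ℝ))),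
        (μ.restrict (ball (0 : E) s)) {w | t < Real.log s - Real.log ‖w‖} ≤
          (ENNReal.ofReal (s ^ d) * μ (ball (0 : E) 1)) * ENNReal.ofReal (Real.exp (-t)) := by
      filter_upwards [ae_restrict_mem measurableSet_Ioi] with t ht
      have htpos : 0 < t := ht
      have hAm : MeasurableSet {w : E | t < Real.log s - Real.log ‖w‖} :=
        measurableSet_lt measurable_const f_mble
      rw [Measure.restrict_apply hAm]
      have hsub : {w : E | t < Real.log s - Real.log ‖w‖} ∩ ball (0 : E) s ⊆
          ball (0 : E) (s * Real.exp (-t)) ∪ {0} := by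
        intro w ⟨hw1, _⟩
        rcases eq_or_ne w 0 with rfl | hw0
        · exact Or.inr rfl
        · left
          rw [mem_ball_zero_iff]
          have h1 : 0 < ‖w‖ := norm_pos_iff.2 hw0
          have hlt : Real.log ‖w‖ < Real.log (s * Real.exp (-t)) := by
            rw [Real.log_mul hs.ne' (Real.exp_pos _).ne', Real.log_exp]
            simpa using by linarith [Set.mem_setOf_eq ▸ hw1]
          have := Real.exp_lt_exp.2 hlt
          rwa [Real.exp_log h1, Real.exp_log (by positivity)] at this
      calc μ ({w : E | t < Real.log s - Real.log ‖w‖} ∩ ball (0 : E) s)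
          ≤ μ (ball (0 : E) (s * Real.exp (-t)) ∪ {0}) := measure_mono hsub
        _ ≤ μ (ball (0 : E) (s * Real.exp (-t))) + μ {0} := measure_union_le _ _
        _ = μ (ball (0 : E) (s * Real.exp (-t))) := by rw [measure_singleton, add_zero]
        _ = ENNReal.ofReal ((s * Real.exp (-t)) ^ d) * μ (ball (0 : E) 1) :=
            μ.addHaar_ball 0 (by positivity)
        _ ≤ (ENNReal.ofReal (s ^ d) * μ (ball (0 : E) 1)) * ENNReal.ofReal (Real.exp (-t)) := by
            rw [mul_right_comm, ← ENNReal.ofReal_mul (by positivity)]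
            refine mul_le_mul_left (ENNReal.ofReal_le_ofReal ?_) _
            rw [mul_pow]
            refine mul_le_mul_of_nonneg_left ?_ (by positivity)
            calc Real.exp (-t) ^ d ≤ Real.exp (-t) ^ 1 :=
                  pow_le_pow_of_le_one (Real.exp_pos _).le
                    (Real.exp_le_one_iff.2 (by linarith)) hd1
              _ = Real.exp (-t) := pow_one _
    calc ∫⁻ t in Set.Ioi (0 : ℝ), (μ.restrict (ball (0 : E) s)) {w | t < Real.log s - Real.log ‖w‖}
        ≤ ∫⁻ t in Set.Ioi (0 : ℝ),
            (ENNReal.ofReal (s ^ d) * μ (ball (0 : E) 1)) * ENNReal.ofReal (Real.exp (-t)) :=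
          lintegral_mono_ae hbd
      _ = (ENNReal.ofReal (s ^ d) * μ (ball (0 : E) 1)) *
            ∫⁻ t in Set.Ioi (0 : ℝ), ENNReal.ofReal (Real.exp (-t)) :=
          lintegral_const_mul' _ _ (ENNReal.mul_ne_top ENNReal.ofReal_ne_top hballne)
      _ = ENNReal.ofReal (s ^ d) * μ (ball (0 : E) 1) := by
          rw [show ∫⁻ t in Set.Ioi (0 : ℝ), ENNReal.ofReal (Real.exp (-t)) = 1 from ?_, mul_one]
          rw [← ofReal_integral_eq_lintegral_ofReal]
          · rw [integral_exp_neg_Ioi_zero, ENNReal.ofReal_one]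
          · exact (by simpa using exp_neg_integrableOn_Ioi 0 one_pos :
                IntegrableOn (fun x : ℝ => Real.exp (-x)) (Set.Ioi 0) volume)
          · exact Filter.Eventually.of_forall fun x => (Real.exp_pos _).le
  calc ∫⁻ w in ball (0 : E) s, ENNReal.ofReal |Real.log ‖w‖| ∂μ
      ≤ ENNReal.ofReal |Real.log s| * μ (ball (0 : E) s) +
          ∫⁻ w in ball (0 : E) s, ENNReal.ofReal (Real.log s - Real.log ‖w‖) ∂μ := by
        rw [← hsplit]; exact hmain
    _ ≤ ENNReal.ofReal |Real.log s| * (ENNReal.ofReal (s ^ d) * μ (ball (0 : E) 1)) +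
          ENNReal.ofReal (s ^ d) * μ (ball (0 : E) 1) := by
        gcongr
        · rw [μ.addHaar_ball 0 hs.le]
    _ = ENNReal.ofReal (s ^ d) * μ (ball (0 : E) 1) * (ENNReal.ofReal |Real.log s| + 1) := by
        ring

open Metric Set in
/-- The main estimate, in an abstract finite-dimensional normed space. -/
lemma inner_log_ball_estimate {E : Type*} [NormedAddCommGroup E] [NormedSpace ℝ E]
    [MeasurableSpace E] [BorelSpace E] [FiniteDimensional ℝ E] [Nontrivial E]
    (μ : Measure E) [μ.IsAddHaarMeasure] (R : ℝ) (hR : 0 < R) :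
    ∃ c > (0 : ℝ), ∀ l : ℝ, 1 ≤ l → ∀ x : E, ‖x‖ ≤ R →
      (l ^ Module.finrank ℝ E *
          (∫⁻ w in ball (0 : E) (1 / l), ENNReal.ofReal |Real.log ‖x - w‖| ∂μ).toReal
        ≤ c + c * Real.log l) ∧
      (x ≠ 0 →
        l ^ Module.finrank ℝ E *
            (∫⁻ w in ball (0 : E) (1 / l), ENNReal.ofReal |Real.log ‖x - w‖| ∂μ).toReal
          ≤ c + c * min (Real.log l) |Real.log ‖x‖|) := by
  set d := Module.finrank ℝ E with hddef
  have hball_pos : 0 < μ (ball (0 : E) 1) := measure_ball_pos μ _ one_pos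
  have hball_lt : μ (ball (0 : E) 1) < ⊤ := measure_ball_lt_top
  set VB : ℝ := (μ (ball (0 : E) 1)).toReal with hVBdef
  have hVB : 0 < VB := ENNReal.toReal_pos hball_pos.ne' hball_lt.ne
  have h3pow : (0 : ℝ) < 3 ^ d := by positivity
  have hlog2 : (0 : ℝ) < Real.log 2 := Real.log_pos one_lt_two
  have hlog3 : (0 : ℝ) < Real.log 3 := Real.log_pos (by norm_num)
  set M : ℝ := max 0 (Real.log (R + 1)) + Real.log 2 with hMdef
  have hM2 : Real.log 2 ≤ M := by simp [hMdef, le_max_left]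
  have hMmax : max 0 (Real.log (R + 1)) ≤ M := by simp [hMdef, hlog2.le]
  have hM0 : 0 < M := lt_of_lt_of_le hlog2 hM2
  set P : ℝ := VB + 3 ^ d * VB with hPdef
  set Q : ℝ := M + |Real.log R| + Real.log 3 + Real.log 2 + 1 with hQdef
  have hP : 0 < P := by nlinarith
  have hQ1 : (1 : ℝ) ≤ Q := by
    have := abs_nonneg (Real.log R); nlinarith
  have hQ0 : 0 < Q := lt_of_lt_of_le one_pos hQ1
  have hVBP : VB ≤ P := by nlinarith
  have h3VBP : 3 ^ d * VB ≤ P := by nlinarith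
  have hPQ : P ≤ P * Q := le_mul_of_one_le_right hP.le hQ1
  refine ⟨P * Q, mul_pos hP hQ0, ?_⟩
  intro l hl x hxR
  have hl0 : (0 : ℝ) < l := lt_of_lt_of_le one_pos hl
  have hlogl : 0 ≤ Real.log l := Real.log_nonneg hl
  set r : ℝ := 1 / l with hrdef
  have hr0 : 0 < r := by positivity
  have hr1 : r ≤ 1 := by rw [hrdef]; exact div_le_one_of_le₀ hl hl0.le
  have hlogr : Real.log r = -Real.log l := by rw [hrdef, one_div, Real.log_inv]
  set J : ENNReal := ∫⁻ w in ball (0 : E) r, ENNReal.ofReal |Real.log ‖x - w‖| ∂μ with hJdef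
  have hlrpow : l ^ d * r ^ d = 1 := by
    rw [← mul_pow, hrdef, mul_one_div_cancel hl0.ne', one_pow]
  rcases le_or_gt (2 * r) ‖x‖ with hcase | hcase
  · -- Case A : far from the singularity
    have hx0 : (0 : ℝ) < ‖x‖ := lt_of_lt_of_le (by positivity) hcase
    set A : ℝ := |Real.log ‖x‖| with hAdef
    have hpt : ∀ w ∈ ball (0 : E) r, |Real.log ‖x - w‖| ≤ M + A := by
      intro w hw
      rw [mem_ball_zero_iff] at hw
      have hlow : ‖x‖ / 2 ≤ ‖x - w‖ := by
        have h1 := norm_sub_norm_le x w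
        linarith
      have hpos : 0 < ‖x - w‖ := lt_of_lt_of_le (by positivity) hlow
      have hup : ‖x - w‖ ≤ R + 1 := by
        have h1 := norm_sub_le x w
        linarith
      rw [abs_le]
      constructor
      · have h1 : Real.log (‖x‖ / 2) ≤ Real.log ‖x - w‖ :=
          Real.log_le_log (by positivity) hlow
        rw [Real.log_div hx0.ne' two_ne_zero] at h1
        have h2 := neg_abs_le (Real.log ‖x‖)
        have h3 : (0:ℝ) ≤ max 0 (Real.log (R + 1)) := le_max_left _ _
        simp only [hAdef, hMdef]; linarith
      · have h1 : Real.log ‖x - w‖ ≤ Real.log (R + 1) := Real.log_le_log hpos hup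
        have h2 : Real.log (R + 1) ≤ max 0 (Real.log (R + 1)) := le_max_right _ _
        have h3 := abs_nonneg (Real.log ‖x‖)
        simp only [hAdef, hMdef]; linarith
    have hJ : J ≤ ENNReal.ofReal (M + A) * μ (ball (0 : E) r) := by
      calc J ≤ ∫⁻ _ in ball (0 : E) r, ENNReal.ofReal (M + A) ∂μ := by
            refine lintegral_mono_ae ?_
            filter_upwards [ae_restrict_mem measurableSet_ball] with w hw
            exact ENNReal.ofReal_le_ofReal (hpt w hw)
        _ = ENNReal.ofReal (M + A) * μ (ball (0 : E) r) := setLIntegral_const _ _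
    have hJr : J.toReal ≤ (M + A) * (r ^ d * VB) := by
      have hfin : ENNReal.ofReal (M + A) * μ (ball (0 : E) r) ≠ ⊤ :=
        ENNReal.mul_ne_top ENNReal.ofReal_ne_top measure_ball_lt_top.ne
      have h1 := ENNReal.toReal_mono hfin hJ
      rw [ENNReal.toReal_mul, ENNReal.toReal_ofReal (by positivity),
        μ.addHaar_ball 0 hr0.le, ENNReal.toReal_mul,
        ENNReal.toReal_ofReal (by positivity)] at h1
      exact h1
    have hkey : l ^ d * J.toReal ≤ (M + A) * VB := by
      calc l ^ d * J.toReal ≤ l ^ d * ((M + A) * (r ^ d * VB)) :=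
            mul_le_mul_of_nonneg_left hJr (by positivity)
        _ = (M + A) * VB * (l ^ d * r ^ d) := by ring
        _ = (M + A) * VB := by rw [hlrpow, mul_one]
    have hA1 : A ≤ |Real.log R| + Real.log l := by
      rw [hAdef, abs_le]
      constructor
      · have h1 : Real.log (2 * r) ≤ Real.log ‖x‖ :=
          Real.log_le_log (by positivity) hcase
        rw [Real.log_mul two_ne_zero hr0.ne', hlogr] at h1
        have h2 := abs_nonneg (Real.log R)
        linarith
      · have h1 : Real.log ‖x‖ ≤ Real.log R := Real.log_le_log hx0 hxR
        have h2 := le_abs_self (Real.log R)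
        linarith
    have hAmin : A ≤ min (Real.log l) A + |Real.log R| := by
      rcases min_cases (Real.log l) A with ⟨h1, h2⟩ | ⟨h1, h2⟩
      · rw [h1]; linarith
      · rw [h1]; linarith [abs_nonneg (Real.log R)]
    have hMA : 0 ≤ M + A := by positivity
    have h2 : (M + |Real.log R|) * VB ≤ P * Q := by
      have hq : M + |Real.log R| ≤ Q := by simp only [hQdef]; linarith
      calc (M + |Real.log R|) * VB ≤ Q * VB :=
            mul_le_mul_of_nonneg_right hq hVB.le
        _ ≤ Q * P := mul_le_mul_of_nonneg_left hVBP hQ0.le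
        _ = P * Q := mul_comm _ _
    constructor
    · have h1 : (M + A) * VB ≤ (M + |Real.log R|) * VB + VB * Real.log l := by
        calc (M + A) * VB ≤ (M + (|Real.log R| + Real.log l)) * VB :=
              mul_le_mul_of_nonneg_right (by linarith) hVB.le
          _ = (M + |Real.log R|) * VB + VB * Real.log l := by ring
      have h3 : VB * Real.log l ≤ P * Q * Real.log l :=
        mul_le_mul_of_nonneg_right (hVBP.trans hPQ) hlogl
      linarith [hkey]
    · intro _
      have hmin0 : 0 ≤ min (Real.log l) A := le_min hlogl (abs_nonneg _)
      have h1 : (M + A) * VB ≤ (M + |Real.log R|) * VB + VB * min (Real.log l) A := by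
        calc (M + A) * VB ≤ (M + (min (Real.log l) A + |Real.log R|)) * VB :=
              mul_le_mul_of_nonneg_right (by linarith) hVB.le
          _ = (M + |Real.log R|) * VB + VB * min (Real.log l) A := by ring
      have h3 : VB * min (Real.log l) A ≤ P * Q * min (Real.log l) A :=
        mul_le_mul_of_nonneg_right (hVBP.trans hPQ) hmin0
      linarith [hkey]
  · -- Case B : near the singularity
    have hsub : ball (0 : E) r ⊆ ball x (3 * r) := by
      intro w hw
      rw [mem_ball_zero_iff] at hw
      rw [mem_ball, dist_eq_norm]
      calc ‖w - x‖ ≤ ‖w‖ + ‖x‖ := norm_sub_le _ _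
        _ < 3 * r := by linarith
    have hpre : (fun w : E => x - w) ⁻¹' ball (0 : E) (3 * r) = ball x (3 * r) := by
      ext w
      rw [Set.mem_preimage, mem_ball_zero_iff, mem_ball, dist_eq_norm, norm_sub_rev]
    have hJle : J ≤ ∫⁻ v in ball (0 : E) (3 * r), ENNReal.ofReal |Real.log ‖v‖| ∂μ := by
      calc J ≤ ∫⁻ w in ball x (3 * r), ENNReal.ofReal |Real.log ‖x - w‖| ∂μ :=
            lintegral_mono_set hsub
        _ = ∫⁻ v in ball (0 : E) (3 * r), ENNReal.ofReal |Real.log ‖v‖| ∂μ := by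
            rw [← hpre]
            exact (Measure.measurePreserving_sub_left μ x).setLIntegral_comp_preimage_emb
              (MeasurableEquiv.subLeft x).measurableEmbedding
              (fun v => ENNReal.ofReal |Real.log ‖v‖|) (ball 0 (3 * r))
    have h3r : (0 : ℝ) < 3 * r := by positivity
    have hK := lintegral_abs_log_norm_ball_le μ h3r
    have hJ2 : J ≤ ENNReal.ofReal ((3 * r) ^ d) * μ (ball (0 : E) 1) *
        (ENNReal.ofReal |Real.log (3 * r)| + 1) := hJle.trans hK
    have hfin : ENNReal.ofReal ((3 * r) ^ d) * μ (ball (0 : E) 1) *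
        (ENNReal.ofReal |Real.log (3 * r)| + 1) ≠ ⊤ :=
      ENNReal.mul_ne_top (ENNReal.mul_ne_top ENNReal.ofReal_ne_top hball_lt.ne)
        (by simp)
    have hJr : J.toReal ≤ (3 * r) ^ d * VB * (|Real.log (3 * r)| + 1) := by
      have h1 := ENNReal.toReal_mono hfin hJ2
      rw [ENNReal.toReal_mul, ENNReal.toReal_mul, ENNReal.toReal_ofReal (by positivity),
        ENNReal.toReal_add ENNReal.ofReal_ne_top ENNReal.one_ne_top,
        ENNReal.toReal_ofReal (abs_nonneg _), ENNReal.toReal_one] at h1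
      exact h1
    have hlog3r : |Real.log (3 * r)| ≤ Real.log 3 + Real.log l := by
      rw [Real.log_mul three_ne_zero hr0.ne', hlogr]
      calc |Real.log 3 + -Real.log l| ≤ |Real.log 3| + |(-Real.log l)| := abs_add_le _ _
        _ = Real.log 3 + Real.log l := by
            rw [abs_of_nonneg hlog3.le, abs_neg, abs_of_nonneg hlogl]
    have hkey : l ^ d * J.toReal ≤ 3 ^ d * VB * (Real.log 3 + Real.log l + 1) := by
      have h1 : l ^ d * J.toReal ≤ 3 ^ d * VB * (|Real.log (3 * r)| + 1) := by
        calc l ^ d * J.toReal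
            ≤ l ^ d * ((3 * r) ^ d * VB * (|Real.log (3 * r)| + 1)) :=
              mul_le_mul_of_nonneg_left hJr (by positivity)
          _ = 3 ^ d * VB * (|Real.log (3 * r)| + 1) * (l ^ d * r ^ d) := by
              rw [mul_pow]; ring
          _ = 3 ^ d * VB * (|Real.log (3 * r)| + 1) := by rw [hlrpow, mul_one]
      have h2 : 3 ^ d * VB * (|Real.log (3 * r)| + 1) ≤
          3 ^ d * VB * (Real.log 3 + Real.log l + 1) :=
        mul_le_mul_of_nonneg_left (by linarith) (by positivity)
      linarith
    constructor
    · have h2 : 3 ^ d * VB * (Real.log 3 + 1) ≤ P * Q := by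
        have hq : Real.log 3 + 1 ≤ Q := by
          simp only [hQdef]; linarith [abs_nonneg (Real.log R)]
        calc 3 ^ d * VB * (Real.log 3 + 1) ≤ 3 ^ d * VB * Q :=
              mul_le_mul_of_nonneg_left hq (by positivity)
          _ ≤ P * Q := mul_le_mul_of_nonneg_right h3VBP hQ0.le
      have h3 : 3 ^ d * VB * Real.log l ≤ P * Q * Real.log l :=
        mul_le_mul_of_nonneg_right (h3VBP.trans hPQ) hlogl
      have hexp : 3 ^ d * VB * (Real.log 3 + Real.log l + 1) =
          3 ^ d * VB * (Real.log 3 + 1) + 3 ^ d * VB * Real.log l := by ring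
      linarith [hkey]
    · intro hx0'
      have hx0 : (0 : ℝ) < ‖x‖ := norm_pos_iff.2 hx0'
      set A : ℝ := |Real.log ‖x‖| with hAdef
      have hminlb : Real.log l - Real.log 2 ≤ min (Real.log l) A := by
        refine le_min (by linarith) ?_
        have h1 : Real.log ‖x‖ ≤ Real.log (2 * r) := Real.log_le_log hx0 hcase.le
        rw [Real.log_mul two_ne_zero hr0.ne', hlogr] at h1
        have h2 := neg_le_abs (Real.log ‖x‖)
        simp only [hAdef]; linarith
      have hmin0 : 0 ≤ min (Real.log l) A := le_min hlogl (abs_nonneg _)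
      have h2 : 3 ^ d * VB * (Real.log 3 + Real.log 2 + 1) ≤ P * Q := by
        have hq : Real.log 3 + Real.log 2 + 1 ≤ Q := by
          simp only [hQdef]; linarith [abs_nonneg (Real.log R)]
        calc 3 ^ d * VB * (Real.log 3 + Real.log 2 + 1) ≤ 3 ^ d * VB * Q :=
              mul_le_mul_of_nonneg_left hq (by positivity)
          _ ≤ P * Q := mul_le_mul_of_nonneg_right h3VBP hQ0.le
      have h3 : 3 ^ d * VB * min (Real.log l) A ≤ P * Q * min (Real.log l) A :=
        mul_le_mul_of_nonneg_right (h3VBP.trans hPQ) hmin0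
      have h4 : 3 ^ d * VB * (Real.log 3 + Real.log l + 1) ≤
          3 ^ d * VB * (Real.log 3 + Real.log 2 + 1) +
            3 ^ d * VB * min (Real.log l) A := by
        calc 3 ^ d * VB * (Real.log 3 + Real.log l + 1)
            ≤ 3 ^ d * VB * ((Real.log 3 + Real.log 2 + 1) + min (Real.log l) A) :=
              mul_le_mul_of_nonneg_left (by linarith) (by positivity)
          _ = 3 ^ d * VB * (Real.log 3 + Real.log 2 + 1) +
              3 ^ d * VB * min (Real.log l) A := by ring
      linarith [hkey]

/-- The Euclidean (Hermitian) norm on `ℂ^n` presented as functions `Fin n → ℂ`. -/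
noncomputable def euclideanNormC {n : ℕ} (z : Fin n → ℂ) : ℝ :=
  ‖(WithLp.equiv 2 (Fin n → ℂ)).symm z‖

/-- Elementary integral estimate: the normalized integral of `|log ‖y − z‖|` over the ball
of radius `1/λ` in `ℂⁿ` is bounded by `c + c·log λ`, and by
`c + c·min(log λ, |log ‖y‖|)` when `y ≠ 0`, uniformly for `‖y‖ ≤ R`. -/
theorem ball_log_integral_estimate (n : ℕ) (hn : 1 ≤ n) (R : ℝ) (hR : 0 < R) :
    ∃ c > (0 : ℝ), ∀ l : ℝ, 1 ≤ l → ∀ y : Fin n → ℂ, euclideanNormC y ≤ R →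
      (l ^ (2 * n) *
          ∫ z in {z : Fin n → ℂ | euclideanNormC z < 1 / l},
            |Real.log (euclideanNormC (y - z))|
        ≤ c + c * Real.log l) ∧
      (y ≠ 0 →
        l ^ (2 * n) *
            ∫ z in {z : Fin n → ℂ | euclideanNormC z < 1 / l},
              |Real.log (euclideanNormC (y - z))|
          ≤ c + c * min (Real.log l) |Real.log (euclideanNormC y)|) := by
  classical
  letI : MeasurableSpace (EuclideanSpace ℂ (Fin n)) := borel _
  haveI : BorelSpace (EuclideanSpace ℂ (Fin n)) := ⟨rfl⟩
  let e : (Fin n → ℂ) ≃ₗ[ℝ] EuclideanSpace ℂ (Fin n) :=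
    (WithLp.linearEquiv 2 ℝ (Fin n → ℂ)).symm
  have he_cont : Continuous (⇑e) :=
    (PiLp.continuousLinearEquiv 2 ℝ (fun _ : Fin n => ℂ)).symm.continuous
  have he_symm_cont : Continuous (⇑e.symm) :=
    (PiLp.continuousLinearEquiv 2 ℝ (fun _ : Fin n => ℂ)).continuous
  let eM : (Fin n → ℂ) ≃ᵐ EuclideanSpace ℂ (Fin n) :=
    { toEquiv := e.toEquiv
      measurable_toFun := he_cont.measurable
      measurable_invFun := he_symm_cont.measurable }
  have hd : Module.finrank ℝ (EuclideanSpace ℂ (Fin n)) = 2 * n := by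
    have h1 : Module.finrank ℝ ℂ * Module.finrank ℂ (EuclideanSpace ℂ (Fin n)) =
        Module.finrank ℝ (EuclideanSpace ℂ (Fin n)) :=
      Module.finrank_mul_finrank ℝ ℂ _
    rw [← h1, finrank_euclideanSpace_fin, Complex.finrank_real_complex]
  haveI : Nontrivial (EuclideanSpace ℂ (Fin n)) := by
    refine Module.nontrivial_of_finrank_pos (R := ℝ) ?_
    rw [hd]; omega
  let μ : Measure (EuclideanSpace ℂ (Fin n)) := volume.map e
  haveI : μ.IsAddHaarMeasure := Measure.MapLinearEquiv.isAddHaarMeasure _ e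
  have hMP : MeasurePreserving eM volume μ := ⟨eM.measurable, rfl⟩
  have hnorm : ∀ z : Fin n → ℂ, ‖eM z‖ = euclideanNormC z := fun z => rfl
  obtain ⟨c, hc, hmain⟩ := inner_log_ball_estimate μ R hR
  refine ⟨c, hc, ?_⟩
  intro l hl y hy
  set x : EuclideanSpace ℂ (Fin n) := eM y with hxdef
  have hxnorm : ‖x‖ = euclideanNormC y := hnorm y
  have H := hmain l hl x (by rw [hxnorm]; exact hy)
  rw [hd] at H
  -- transfer the integral
  have hset : {z : Fin n → ℂ | euclideanNormC z < 1 / l} =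
      eM ⁻¹' (Metric.ball (0 : EuclideanSpace ℂ (Fin n)) (1 / l)) := by
    ext z
    rw [Set.mem_setOf_eq, Set.mem_preimage, mem_ball_zero_iff, hnorm z]
  have hintegrand : ∀ z : Fin n → ℂ,
      |Real.log (euclideanNormC (y - z))| = |Real.log ‖x - eM z‖| := by
    intro z
    have hsub : (eM (y - z) : EuclideanSpace ℂ (Fin n)) = x - eM z := map_sub e y z
    rw [← hnorm (y - z), hsub]
  have hmeasg : Measurable fun w : EuclideanSpace ℂ (Fin n) => |Real.log ‖x - w‖| :=
    (Real.measurable_log.comp (measurable_const.sub measurable_id).norm).abs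
  have hint : (∫ z in {z : Fin n → ℂ | euclideanNormC z < 1 / l},
      |Real.log (euclideanNormC (y - z))|) =
      (∫⁻ w in Metric.ball (0 : EuclideanSpace ℂ (Fin n)) (1 / l),
        ENNReal.ofReal |Real.log ‖x - w‖| ∂μ).toReal := by
    rw [hset]
    simp_rw [hintegrand]
    rw [hMP.setIntegral_preimage_emb eM.measurableEmbedding
      (fun w => |Real.log ‖x - w‖|) _]
    exact integral_eq_lintegral_of_nonneg_ae
      (Filter.Eventually.of_forall fun w => abs_nonneg _) hmeasg.aestronglyMeasurable
  refine ⟨?_, fun hy0 => ?_⟩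
  · rw [hint]; exact H.1
  · rw [hint, ← hxnorm]
    refine H.2 fun hx0 => hy0 ?_
    have : e y = 0 := hx0
    simpa using (LinearEquiv.map_eq_zero_iff e).1 this
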